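/- arXiv:2503.18209 — 3 statements merged into one kernel-verified Lean document; each statement's English description precedes it below -/
import Mathlib

section
/- Let (X, d) be a complete generalized metric space (d may take the value ∞) and J : X → X a strictly contractive mapping with Lipschitz constant L < 1. Then for each x ∈ X, either d(Jⁿx, Jⁿ⁺¹x) = ∞ for all nonnegative integers n, or there exists a positive integer n₀ such that: (1) d(Jⁿx, Jⁿ⁺¹x) < ∞ for all n ≥ n₀; (2) the sequence {Jⁿx} converges to a fixed point y* of J; (3) y* is the unique fixed point of J in the set Y = {y ∈ X : d(J^{n₀}x, y) < ∞}; (4) d(y, y*) ≤ (1/(1−L)) d(y, Jy) for all y ∈ Y. -/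
/-- The Diaz–Margolis fixed point alternative on complete generalized metric spaces. -/
theorem fixed_point_alternative {X : Type*} (d : X → X → ENNReal)
    (h_eq : ∀ x y : X, d x y = 0 ↔ x = y)
    (h_symm : ∀ x y : X, d x y = d y x)
    (h_tri : ∀ x y z : X, d x z ≤ d x y + d y z)
    (h_complete : ∀ u : ℕ → X,
      (∀ ε : ENNReal, 0 < ε → ∃ N : ℕ, ∀ m ≥ N, ∀ n ≥ N, d (u m) (u n) < ε) →
      ∃ x : X, Filter.Tendsto (fun n => d (u n) x) Filter.atTop (nhds 0))
    (J : X → X) (L : ℝ) (hL0 : 0 ≤ L) (hL1 : L < 1)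
    (h_contr : ∀ x y : X, d (J x) (J y) ≤ ENNReal.ofReal L * d x y)
    (x : X) :
    (∀ n : ℕ, d (J^[n] x) (J^[n + 1] x) = ⊤) ∨
      ∃ n₀ : ℕ, 0 < n₀ ∧
        (∀ n ≥ n₀, d (J^[n] x) (J^[n + 1] x) < ⊤) ∧
        ∃ ystar : X, J ystar = ystar ∧
          Filter.Tendsto (fun n => d (J^[n] x) ystar) Filter.atTop (nhds 0) ∧
          d (J^[n₀] x) ystar < ⊤ ∧
          (∀ z : X, J z = z → d (J^[n₀] x) z < ⊤ → z = ystar) ∧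
          (∀ y : X, d (J^[n₀] x) y < ⊤ →
            d y ystar ≤ ENNReal.ofReal (1 / (1 - L)) * d y (J y)) := by
  by_cases hfin : ∀ n : ℕ, d (J^[n] x) (J^[n + 1] x) = ⊤
  · exact Or.inl hfin
  right
  push_neg at hfin
  obtain ⟨m₀, hm₀⟩ := hfin
  set u : ℕ → X := fun n => J^[n] x with hu
  set a : ℕ → ENNReal := fun n => d (u n) (u (n + 1)) with ha
  have hstep : ∀ n, u (n + 1) = J (u n) := fun n => Function.iterate_succ_apply' J n x
  set ℓ := ENNReal.ofReal L with hℓ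
  have hℓ1 : ℓ < 1 := by rw [hℓ]; exact ENNReal.ofReal_lt_one.2 hL1
  have hℓtop : ℓ ≠ ⊤ := ENNReal.ofReal_ne_top
  have ham₀ : a m₀ ≠ ⊤ := hm₀
  -- contraction step on consecutive distances
  have hcontr' : ∀ n, a (n + 1) ≤ ℓ * a n := by
    intro n
    have h := h_contr (u n) (u (n + 1))
    rw [← hstep n, ← hstep (n + 1)] at h
    exact h
  have hdecay : ∀ k, a (m₀ + k) ≤ ℓ ^ k * a m₀ := by
    intro k
    induction k with
    | zero => simp
    | succ k ih =>
      calc a (m₀ + (k + 1)) = a ((m₀ + k) + 1) := by ring_nf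
        _ ≤ ℓ * a (m₀ + k) := hcontr' _
        _ ≤ ℓ * (ℓ ^ k * a m₀) := mul_le_mul_right ih _
        _ = ℓ ^ (k + 1) * a m₀ := by ring
  -- chain of triangle inequalities
  have hchain : ∀ n k, d (u n) (u (n + k)) ≤ ∑ i ∈ Finset.range k, a (n + i) := by
    intro n k
    induction k with
    | zero => simp [(h_eq (u n) (u n)).2 rfl]
    | succ k ih =>
      calc d (u n) (u (n + (k + 1))) ≤ d (u n) (u (n + k)) + d (u (n + k)) (u (n + k + 1)) := by
            have := h_tri (u n) (u (n + k)) (u (n + k + 1))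
            simpa [Nat.add_assoc] using this
        _ ≤ (∑ i ∈ Finset.range k, a (n + i)) + a (n + k) := add_le_add_left ih _
        _ = ∑ i ∈ Finset.range (k + 1), a (n + i) := (Finset.sum_range_succ _ _).symm
  have hgeom : ∀ k : ℕ, (∑ i ∈ Finset.range k, ℓ ^ i) ≤ (1 - ℓ)⁻¹ := by
    intro k
    calc (∑ i ∈ Finset.range k, ℓ ^ i) ≤ ∑' i, ℓ ^ i := ENNReal.sum_le_tsum _
      _ = (1 - ℓ)⁻¹ := ENNReal.tsum_geometric ℓ
  set C := a m₀ * (1 - ℓ)⁻¹ with hCdef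
  have hsub : (1 : ENNReal) - ℓ ≠ 0 := (tsub_pos_of_lt hℓ1).ne'
  have hCtop : C ≠ ⊤ := ENNReal.mul_ne_top ham₀ (ENNReal.inv_ne_top.2 hsub)
  -- main bound
  have hB : ∀ j k : ℕ, d (u (m₀ + j)) (u (m₀ + j + k)) ≤ ℓ ^ j * C := by
    intro j k
    calc d (u (m₀ + j)) (u (m₀ + j + k)) ≤ ∑ i ∈ Finset.range k, a (m₀ + j + i) := hchain _ _
      _ ≤ ∑ i ∈ Finset.range k, ℓ ^ (j + i) * a m₀ := by
          refine Finset.sum_le_sum fun i _ => ?_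
          have := hdecay (j + i)
          simpa [Nat.add_assoc] using this
      _ = (ℓ ^ j * a m₀) * ∑ i ∈ Finset.range k, ℓ ^ i := by
          rw [Finset.mul_sum]
          refine Finset.sum_congr rfl fun i _ => ?_
          rw [pow_add]; ring
      _ ≤ (ℓ ^ j * a m₀) * (1 - ℓ)⁻¹ := mul_le_mul_right (hgeom k) _
      _ = ℓ ^ j * C := by rw [hCdef]; ring
  have htendC : Filter.Tendsto (fun j : ℕ => ℓ ^ j * C) Filter.atTop (nhds 0) := by
    have h1 : Filter.Tendsto (fun j : ℕ => ℓ ^ j) Filter.atTop (nhds 0) :=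
      ENNReal.tendsto_pow_atTop_nhds_zero_of_lt_one hℓ1
    have := ENNReal.Tendsto.mul_const h1 (Or.inr hCtop)
    simpa using this
  -- Cauchy
  have hCauchy : ∀ ε : ENNReal, 0 < ε → ∃ N : ℕ, ∀ m ≥ N, ∀ n ≥ N, d (u m) (u n) < ε := by
    intro ε hε
    obtain ⟨j₀, hj₀⟩ := Filter.eventually_atTop.1 (htendC.eventually_lt_const hε)
    refine ⟨m₀ + j₀, ?_⟩
    have key : ∀ m n, m₀ + j₀ ≤ m → m ≤ n → d (u m) (u n) < ε := by
      intro m n hm hmn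
      have hj : j₀ ≤ m - m₀ := by omega
      have hm' : m = m₀ + (m - m₀) := by omega
      have hn' : n = m₀ + (m - m₀) + (n - m) := by omega
      have hbnd := hB (m - m₀) (n - m)
      rw [← hm'] at hbnd
      rw [show m + (n - m) = n from by omega] at hbnd
      exact lt_of_le_of_lt hbnd (hj₀ _ hj)
    intro m hm n hn
    rcases le_total m n with h | h
    · exact key m n hm h
    · rw [h_symm]; exact key n m hn h
  obtain ⟨ystar, hy⟩ := h_complete u hCauchy
  -- ystar is a fixed point
  have hy' : Filter.Tendsto (fun n => d (u (n + 1)) ystar) Filter.atTop (nhds 0) :=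
    hy.comp (Filter.tendsto_add_atTop_nat 1)
  have hfix : J ystar = ystar := by
    have hbd : ∀ n, d ystar (J ystar) ≤ d (u (n + 1)) ystar + ℓ * d (u n) ystar := by
      intro n
      calc d ystar (J ystar) ≤ d ystar (u (n + 1)) + d (u (n + 1)) (J ystar) := h_tri _ _ _
        _ = d (u (n + 1)) ystar + d (J (u n)) (J ystar) := by rw [h_symm, hstep n]
        _ ≤ d (u (n + 1)) ystar + ℓ * d (u n) ystar := add_le_add_right (h_contr _ _) _
    have htend : Filter.Tendsto (fun n => d (u (n + 1)) ystar + ℓ * d (u n) ystar)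
        Filter.atTop (nhds 0) := by
      have h2 : Filter.Tendsto (fun n => ℓ * d (u n) ystar) Filter.atTop (nhds 0) := by
        have := ENNReal.Tendsto.const_mul hy (Or.inr hℓtop)
        simpa using this
      simpa using hy'.add h2
    have : d ystar (J ystar) ≤ 0 := ge_of_tendsto htend (Filter.Eventually.of_forall hbd)
    have h0 : d ystar (J ystar) = 0 := le_antisymm this zero_le
    exact ((h_eq _ _).1 (by rw [h_symm] at h0; exact h0))
  have hystarfin : d (u (m₀ + 1)) ystar < ⊤ := by
    obtain ⟨N', hN'⟩ := Filter.eventually_atTop.1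
      (hy.eventually_lt_const (by norm_num : (0 : ENNReal) < 1))
    set n := max (m₀ + 1) N' with hn
    have h1 : d (u (m₀ + 1)) (u n) ≤ ℓ ^ 1 * C := by
      have hn' : n = m₀ + 1 + (n - (m₀ + 1)) := by omega
      rw [hn']; exact hB 1 _
    calc d (u (m₀ + 1)) ystar ≤ d (u (m₀ + 1)) (u n) + d (u n) ystar := h_tri _ _ _
      _ ≤ ℓ ^ 1 * C + d (u n) ystar := add_le_add_left h1 _
      _ < ⊤ := ENNReal.add_lt_top.2 ⟨(ENNReal.mul_ne_top (ENNReal.pow_ne_top hℓtop)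
            hCtop).lt_top, (hN' n (le_max_right _ _)).trans_le le_top⟩
  refine ⟨m₀ + 1, Nat.succ_pos _, ?_, ystar, hfix, hy, hystarfin, ?_, ?_⟩
  · -- finiteness of consecutive distances
    intro n hn
    have hn' : n = m₀ + (n - m₀) := by omega
    have hbnd := hdecay (n - m₀)
    rw [← hn'] at hbnd
    exact lt_of_le_of_lt hbnd (ENNReal.mul_ne_top (ENNReal.pow_ne_top hℓtop) ham₀).lt_top
  · -- uniqueness
    intro z hz hzfin
    have hδfin : d z ystar ≠ ⊤ := by
      refine (lt_of_le_of_lt (h_tri z (u (m₀ + 1)) ystar) ?_).ne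
      refine ENNReal.add_lt_top.2 ⟨?_, ?_⟩
      · rw [h_symm]; exact hzfin
      · exact hystarfin
    have hle : d z ystar ≤ ℓ * d z ystar := by
      calc d z ystar = d (J z) (J ystar) := by rw [hz, hfix]
        _ ≤ ℓ * d z ystar := h_contr _ _
    by_contra hne
    have hz0 : d z ystar ≠ 0 := fun h => hne ((h_eq _ _).1 h)
    have : ℓ * d z ystar < 1 * d z ystar :=
      by rw [mul_comm ℓ, mul_comm (1 : ENNReal)]; exact ENNReal.mul_lt_mul_right hz0 hδfin hℓ1
    rw [one_mul] at this
    exact absurd (lt_of_le_of_lt hle this) (lt_irrefl _)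
  · -- estimate (4)
    intro y hyfin
    have hpos : (0 : ℝ) < 1 / (1 - L) := by
      have h1L : (0 : ℝ) < 1 - L := by linarith
      positivity
    by_cases hb : d y (J y) = ⊤
    · rw [hb, ENNReal.mul_top (by simp [ENNReal.ofReal_eq_zero]; linarith)]
      exact le_top
    · have hδfin : d y ystar ≠ ⊤ := by
        refine (lt_of_le_of_lt (h_tri y (u (m₀ + 1)) ystar) ?_).ne
        exact ENNReal.add_lt_top.2 ⟨by rw [h_symm]; exact hyfin, hystarfin⟩
      have key : d y ystar ≤ d y (J y) + ℓ * d y ystar := by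
        calc d y ystar ≤ d y (J y) + d (J y) ystar := h_tri _ _ _
          _ = d y (J y) + d (J y) (J ystar) := by rw [hfix]
          _ ≤ d y (J y) + ℓ * d y ystar := add_le_add_right (h_contr _ _) _
      set r := (d y ystar).toReal with hr
      set s := (d y (J y)).toReal with hs
      have hrhs_fin : d y (J y) + ℓ * d y ystar ≠ ⊤ :=
        ENNReal.add_ne_top.2 ⟨hb, ENNReal.mul_ne_top hℓtop hδfin⟩
      have hreal : r ≤ s + L * r := by
        have h1 := ENNReal.toReal_mono hrhs_fin key
        rwa [ENNReal.toReal_add hb (ENNReal.mul_ne_top hℓtop hδfin),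
          ENNReal.toReal_mul, ENNReal.toReal_ofReal hL0] at h1
      have hrle : r ≤ 1 / (1 - L) * s := by
        rw [div_mul_eq_mul_div, one_mul, le_div_iff₀ (by linarith)]
        nlinarith
      calc d y ystar = ENNReal.ofReal r := (ENNReal.ofReal_toReal hδfin).symm
        _ ≤ ENNReal.ofReal (1 / (1 - L) * s) :=
            ENNReal.ofReal_le_ofReal hrle
        _ = ENNReal.ofReal (1 / (1 - L)) * ENNReal.ofReal s :=
            ENNReal.ofReal_mul hpos.le
        _ = ENNReal.ofReal (1 / (1 - L)) * d y (J y) := by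
            rw [hs, ENNReal.ofReal_toReal hb]
end

section
/- Let f : Ξ → ∇ be a mapping between Banach spaces (or Hilbert C*-modules) and φ : Ξ³ → [0, ∞) a function satisfying ‖f(μx + y) − μf(x) − f(y)‖ ≤ φ(x, y, 0) for all x, y ∈ Ξ and all μ with |μ| = 1. If there exists 0 ≤ L < 1 with φ(x, y, z) ≤ 2L·φ(x/2, y/2, z/2) for all x, y, z ∈ Ξ, then the limit H(x) := lim_{n→∞} f(2ⁿx)/2ⁿ exists for every x ∈ Ξ, H is ℂ-linear, and ‖f(x) − H(x)‖ ≤ (1/(2 − 2L))·φ(x, x, 0) for all x ∈ Ξ. -/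
open Filter Topology

/-- Existence of the ℂ-linear limit map for the direct-method Hyers–Ulam iteration. -/
theorem additive_limit_direct
    {E F : Type*} [NormedAddCommGroup E] [NormedSpace ℂ E]
    [NormedAddCommGroup F] [NormedSpace ℂ F] [CompleteSpace F]
    (f : E → F) (φ : E → E → E → ℝ) (hφ0 : ∀ x y z : E, 0 ≤ φ x y z)
    (h1 : ∀ (μ : ℂ), ‖μ‖ = 1 → ∀ x y : E,
      ‖f (μ • x + y) - μ • f x - f y‖ ≤ φ x y 0)
    (L : ℝ) (hL0 : 0 ≤ L) (hL1 : L < 1)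
    (hφ : ∀ x y z : E,
      φ x y z ≤ 2 * L * φ ((2 : ℂ)⁻¹ • x) ((2 : ℂ)⁻¹ • y) ((2 : ℂ)⁻¹ • z)) :
    ∃ H : E → F,
      (∀ x : E, Filter.Tendsto (fun n : ℕ => ((2 : ℂ) ^ n)⁻¹ • f ((2 : ℂ) ^ n • x))
        Filter.atTop (nhds (H x))) ∧
      (∀ (α β : ℂ) (x y : E), H (α • x + β • y) = α • H x + β • H y) ∧
      (∀ x : E, ‖f x - H x‖ ≤ 1 / (2 - 2 * L) * φ x x 0) := by
  set g : ℕ → E → F := fun n x => ((2 : ℂ) ^ n)⁻¹ • f ((2 : ℂ) ^ n • x) with hg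
  -- iterated φ bound
  have key : ∀ (x y : E) (n : ℕ),
      φ ((2 : ℂ) ^ n • x) ((2 : ℂ) ^ n • y) 0 ≤ (2 * L) ^ n * φ x y 0 := by
    intro x y n
    induction n with
    | zero => simp
    | succ n ih =>
      have h2 : ∀ v : E, (2 : ℂ)⁻¹ • ((2 : ℂ) ^ (n + 1) • v) = (2 : ℂ) ^ n • v := by
        intro v
        rw [smul_smul]
        congr 1
        rw [pow_succ, mul_comm ((2:ℂ)^n) 2, ← mul_assoc,
          inv_mul_cancel₀ (two_ne_zero), one_mul]
      have := hφ ((2 : ℂ) ^ (n + 1) • x) ((2 : ℂ) ^ (n + 1) • y) 0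
      rw [h2, h2, smul_zero] at this
      calc φ ((2:ℂ)^(n+1) • x) ((2:ℂ)^(n+1) • y) 0
          ≤ 2 * L * φ ((2:ℂ)^n • x) ((2:ℂ)^n • y) 0 := this
        _ ≤ 2 * L * ((2 * L) ^ n * φ x y 0) := by
            have h2L : (0:ℝ) ≤ 2 * L := by linarith
            exact mul_le_mul_of_nonneg_left ih h2L
        _ = (2 * L) ^ (n + 1) * φ x y 0 := by ring
  have hnorm2 : ∀ n : ℕ, ‖((2 : ℂ) ^ n)⁻¹‖ = ((2:ℝ) ^ n)⁻¹ := by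
    intro n
    have h2 : ‖(2:ℂ)‖ = 2 := by norm_num
    rw [norm_inv, norm_pow, h2]
  -- the Cauchy distance bound
  have hdist : ∀ (x : E) (n : ℕ),
      dist (g n x) (g (n + 1) x) ≤ (φ x x 0 / 2) * L ^ n := by
    intro x n
    set a : E := (2 : ℂ) ^ n • x with ha
    have h2 : (2 : ℂ) ^ (n + 1) • x = a + a := by
      rw [pow_succ, mul_comm, mul_smul, two_smul]
    have hc : ((2 : ℂ) ^ (n + 1))⁻¹ * 2 = ((2 : ℂ) ^ n)⁻¹ := by
      field_simp [pow_succ]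
      ring
    have hgn : g n x = ((2 : ℂ) ^ (n + 1))⁻¹ • ((2 : ℂ) • f a) := by
      rw [smul_smul, hc]
    have hsub : g n x - g (n + 1) x
        = ((2 : ℂ) ^ (n + 1))⁻¹ • ((2 : ℂ) • f a - f (a + a)) := by
      rw [hgn, smul_sub]
      simp only [hg, h2]
    have hb : ‖(2 : ℂ) • f a - f (a + a)‖ ≤ (2 * L) ^ n * φ x x 0 := by
      have := h1 1 norm_one a a
      rw [one_smul, one_smul] at this
      calc ‖(2 : ℂ) • f a - f (a + a)‖ = ‖f (a + a) - (2 : ℂ) • f a‖ := norm_sub_rev _ _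
        _ = ‖f (a + a) - f a - f a‖ := by rw [two_smul, sub_sub]
        _ ≤ φ a a 0 := this
        _ ≤ (2 * L) ^ n * φ x x 0 := key x x n
    rw [dist_eq_norm, hsub, norm_smul, hnorm2]
    calc ((2:ℝ) ^ (n+1))⁻¹ * ‖(2 : ℂ) • f a - f (a + a)‖
        ≤ ((2:ℝ) ^ (n+1))⁻¹ * ((2 * L) ^ n * φ x x 0) := by
          apply mul_le_mul_of_nonneg_left hb
          positivity
      _ = (φ x x 0 / 2) * L ^ n := by
          rw [mul_pow]
          have : ((2:ℝ) ^ (n+1)) ≠ 0 := by positivity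
          field_simp [pow_succ]
          ring
  have hcauchy : ∀ x : E, ∃ l : F, Tendsto (fun n => g n x) atTop (𝓝 l) := by
    intro x
    exact cauchySeq_tendsto_of_complete
      (cauchySeq_of_le_geometric L (φ x x 0 / 2) hL1 (hdist x))
  choose H hH using hcauchy
  -- helper : L^n * c → 0
  have hLtend : ∀ c : ℝ, Tendsto (fun n : ℕ => L ^ n * c) atTop (𝓝 0) := by
    intro c
    have := (tendsto_pow_atTop_nhds_zero_of_lt_one hL0 hL1).mul_const c
    simpa using this
  -- additivity
  have hadd : ∀ x y : E, H (x + y) = H x + H y := by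
    intro x y
    have t1 : Tendsto (fun n => g n (x + y) - g n x - g n y) atTop
        (𝓝 (H (x + y) - H x - H y)) := ((hH (x + y)).sub (hH x)).sub (hH y)
    have t0 : Tendsto (fun n => g n (x + y) - g n x - g n y) atTop (𝓝 0) := by
      apply squeeze_zero_norm _ (hLtend (φ x y 0))
      intro n
      have hsub : g n (x + y) - g n x - g n y
          = ((2 : ℂ) ^ n)⁻¹ • (f ((2:ℂ)^n • x + (2:ℂ)^n • y)
              - f ((2:ℂ)^n • x) - f ((2:ℂ)^n • y)) := by
        simp only [hg, smul_add]
        module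
      have hb := h1 1 norm_one ((2:ℂ)^n • x) ((2:ℂ)^n • y)
      rw [one_smul, one_smul] at hb
      rw [hsub, norm_smul, hnorm2]
      calc ((2:ℝ)^n)⁻¹ * ‖f ((2:ℂ)^n • x + (2:ℂ)^n • y)
              - f ((2:ℂ)^n • x) - f ((2:ℂ)^n • y)‖
          ≤ ((2:ℝ)^n)⁻¹ * ((2 * L) ^ n * φ x y 0) := by
            apply mul_le_mul_of_nonneg_left (hb.trans (key x y n))
            positivity
        _ = L ^ n * φ x y 0 := by
            rw [mul_pow]
            have : ((2:ℝ) ^ n) ≠ 0 := by positivity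
            field_simp
    have h' : H (x + y) - H x - H y = 0 := tendsto_nhds_unique t1 t0
    rw [sub_sub, sub_eq_zero] at h'
    exact h'
  have hzero : H 0 = 0 := by
    have := hadd 0 0
    rw [add_zero] at this
    exact (left_eq_add.mp this)
  -- homogeneity for unit scalars
  have hunit : ∀ (μ : ℂ), ‖μ‖ = 1 → ∀ x : E, H (μ • x) = μ • H x := by
    intro μ hμ x
    have t1 : Tendsto (fun n => g n (μ • x) - μ • g n x - ((2:ℂ)^n)⁻¹ • f 0)
        atTop (𝓝 (H (μ • x) - μ • H x - 0)) := by
      refine Tendsto.sub (Tendsto.sub (hH (μ • x)) ((hH x).const_smul μ)) ?_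
      have hf0 : Tendsto (fun n : ℕ => ((2:ℝ)^n)⁻¹ * ‖f (0:E)‖) atTop (𝓝 0) := by
        have h2 : Tendsto (fun n : ℕ => ((2:ℝ)⁻¹) ^ n) atTop (𝓝 0) :=
          tendsto_pow_atTop_nhds_zero_of_lt_one (by norm_num) (by norm_num)
        have := h2.mul_const ‖f (0:E)‖
        simpa [inv_pow] using this
      apply squeeze_zero_norm _ hf0
      intro n
      rw [norm_smul, hnorm2]
    have t0 : Tendsto (fun n => g n (μ • x) - μ • g n x - ((2:ℂ)^n)⁻¹ • f 0)
        atTop (𝓝 0) := by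
      apply squeeze_zero_norm _ (hLtend (φ x 0 0))
      intro n
      have hsub : g n (μ • x) - μ • g n x - ((2:ℂ)^n)⁻¹ • f 0
          = ((2 : ℂ) ^ n)⁻¹ • (f (μ • ((2:ℂ)^n • x) + 0)
              - μ • f ((2:ℂ)^n • x) - f 0) := by
        have hcomm : (2:ℂ)^n • μ • x = μ • ((2:ℂ)^n • x) := smul_comm _ _ _
        simp only [hg, hcomm, add_zero]
        module
      have hb := h1 μ hμ ((2:ℂ)^n • x) 0
      have hkey' : φ ((2:ℂ)^n • x) ((2:ℂ)^n • (0:E)) 0 ≤ (2*L)^n * φ x 0 0 := key x 0 n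
      rw [smul_zero] at hkey'
      rw [hsub, norm_smul, hnorm2]
      calc ((2:ℝ)^n)⁻¹ * ‖f (μ • ((2:ℂ)^n • x) + 0) - μ • f ((2:ℂ)^n • x) - f 0‖
          ≤ ((2:ℝ)^n)⁻¹ * ((2 * L) ^ n * φ x 0 0) := by
            apply mul_le_mul_of_nonneg_left (hb.trans hkey')
            positivity
        _ = L ^ n * φ x 0 0 := by
            rw [mul_pow]
            have : ((2:ℝ) ^ n) ≠ 0 := by positivity
            field_simp
    have h' : H (μ • x) - μ • H x - 0 = 0 := tendsto_nhds_unique t1 t0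
    rw [sub_zero, sub_eq_zero] at h'
    exact h'
  -- natural-number homogeneity
  have hnat : ∀ (n : ℕ) (x : E), H ((n : ℂ) • x) = (n : ℂ) • H x := by
    intro n
    induction n with
    | zero => intro x; simp [hzero]
    | succ n ih =>
      intro x
      have : ((n + 1 : ℕ) : ℂ) • x = (n : ℂ) • x + x := by
        push_cast
        rw [add_smul, one_smul]
      rw [this, hadd, ih]
      push_cast
      rw [add_smul, one_smul]
  -- real scalars in [-2,2]
  have hreal_small : ∀ t : ℝ, |t| ≤ 2 → ∀ x : E, H ((t : ℂ) • x) = (t : ℂ) • H x := by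
    intro t ht x
    have ht1 : (t / 2) ^ 2 ≤ 1 := by
      have : |t / 2| ≤ 1 := by rw [abs_div]; simp [abs_of_nonneg]; linarith [abs_nonneg t, ht]
      nlinarith [abs_nonneg (t/2), sq_abs (t/2)]
    set s : ℝ := Real.sqrt (1 - (t / 2) ^ 2) with hs
    have hs2 : s ^ 2 = 1 - (t / 2) ^ 2 := Real.sq_sqrt (by linarith)
    set μ : ℂ := Complex.mk (t / 2) s with hμdef
    have hμre : μ.re = t / 2 := rfl
    have hμim : μ.im = s := rfl
    have hμnorm : ‖μ‖ = 1 := by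
      rw [Complex.norm_def, Complex.normSq_apply, hμre, hμim]
      rw [show t / 2 * (t / 2) + s * s = (t/2)^2 + s^2 by ring, hs2]
      simp
    have hstarnorm : ‖(starRingEnd ℂ) μ‖ = 1 := by
      rw [RCLike.norm_conj]; exact hμnorm
    have hsum : μ + (starRingEnd ℂ) μ = (t : ℂ) := by
      apply Complex.ext
      · simp [hμre]
      · simp [hμim]
    have hsplit : (t : ℂ) • x = μ • x + ((starRingEnd ℂ) μ) • x := by
      rw [← add_smul, hsum]
    rw [hsplit, hadd, hunit μ hμnorm, hunit _ hstarnorm, ← add_smul, hsum]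
  -- all real scalars
  have hreal : ∀ (t : ℝ) (x : E), H ((t : ℂ) • x) = (t : ℂ) • H x := by
    intro t x
    set n : ℕ := ⌈|t|⌉₊ + 1 with hn
    have hnpos : (0:ℝ) < (n : ℝ) := by positivity
    have hle : |t| ≤ (n : ℝ) := by
      calc |t| ≤ (⌈|t|⌉₊ : ℝ) := Nat.le_ceil _
        _ ≤ (n : ℝ) := by push_cast [hn]; linarith
    have hsmall : |t / n| ≤ 2 := by
      rw [abs_div, abs_of_pos hnpos, div_le_iff₀ hnpos]
      linarith
    have hne : (n : ℂ) ≠ 0 := by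
      exact Nat.cast_ne_zero.mpr (by rw [hn]; omega)
    clear_value n
    have hdecomp : (t : ℂ) • x = (n : ℂ) • (((t / n : ℝ) : ℂ) • x) := by
      rw [smul_smul]
      congr 1
      push_cast
      field_simp
    rw [hdecomp, hnat, hreal_small _ hsmall, smul_smul]
    congr 1
    push_cast
    field_simp
  -- complex scalars
  have hC : ∀ (α : ℂ) (x : E), H (α • x) = α • H x := by
    intro α x
    rcases eq_or_ne α 0 with rfl | hα
    · simp [hzero]
    · have hαn : (‖α‖ : ℝ) ≠ 0 := norm_ne_zero_iff.mpr hα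
      set u : ℂ := α / (‖α‖ : ℂ) with hu
      have hcast : ((‖α‖ : ℝ) : ℂ) ≠ 0 := by exact_mod_cast hαn
      have hun : ‖u‖ = 1 := by
        rw [hu, norm_div]
        simp only [Complex.norm_real, norm_norm]
        rw [div_self hαn]
      have hαu : α = u * (‖α‖ : ℂ) := by
        rw [hu, div_mul_cancel₀ _ hcast]
      have : α • x = u • (((‖α‖ : ℝ) : ℂ) • x) := by
        rw [smul_smul, ← hαu]
      rw [this, hunit u hun, hreal, smul_smul, ← hαu]
  refine ⟨H, hH, ?_, ?_⟩
  · intro α β x y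
    rw [hadd, hC, hC]
  · intro x
    have hb := dist_le_of_le_geometric_of_tendsto₀ L (φ x x 0 / 2) hL1 (hdist x) (hH x)
    have hg0 : g 0 x = f x := by simp [hg]
    rw [hg0, dist_eq_norm] at hb
    have heq : φ x x 0 / 2 / (1 - L) = 1 / (2 - 2 * L) * φ x x 0 := by
      rw [div_div, show (2:ℝ) * (1 - L) = 2 - 2 * L by ring, one_div,
        inv_mul_eq_div]
    rw [← heq]
    exact hb
end

section
/- Let f : Ξ → ∇ be a mapping between complex Banach spaces and φ : Ξ³ → [0, ∞) a function satisfying ‖f(μx + y) − μf(x) − f(y)‖ ≤ φ(x, y, 0) for all x, y ∈ Ξ and all μ with |μ| = 1. If there exists 0 ≤ L < 1 with φ(x, y, z) ≤ (L/8)·φ(2x, 2y, 2z) for all x, y, z ∈ Ξ, then the limit H(x) := lim_{n→∞} 2ⁿ f(x/2ⁿ) exists for every x ∈ Ξ, H is ℂ-linear, H(x/2) = H(x)/2 for all x, and ‖f(x) − H(x)‖ ≤ (L/(8 − 8L))·φ(x, x, 0) for all x ∈ Ξ. -/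
set_option maxHeartbeats 1000000 in
/-- Existence of the ℂ-linear limit map for the inverse-direction Hyers–Ulam iteration. -/
theorem additive_limit_inverse
    {E F : Type*} [NormedAddCommGroup E] [NormedSpace ℂ E]
    [NormedAddCommGroup F] [NormedSpace ℂ F] [CompleteSpace F]
    (f : E → F) (φ : E → E → E → ℝ) (hφ0 : ∀ x y z : E, 0 ≤ φ x y z)
    (h1 : ∀ (μ : ℂ), ‖μ‖ = 1 → ∀ x y : E,
      ‖f (μ • x + y) - μ • f x - f y‖ ≤ φ x y 0)
    (L : ℝ) (hL0 : 0 ≤ L) (hL1 : L < 1)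
    (hφ : ∀ x y z : E,
      φ x y z ≤ L / 8 * φ ((2 : ℂ) • x) ((2 : ℂ) • y) ((2 : ℂ) • z)) :
    ∃ H : E → F,
      (∀ x : E, Filter.Tendsto (fun n : ℕ => (2 : ℂ) ^ n • f (((2 : ℂ) ^ n)⁻¹ • x))
        Filter.atTop (nhds (H x))) ∧
      (∀ (α β : ℂ) (x y : E), H (α • x + β • y) = α • H x + β • H y) ∧
      (∀ x : E, H ((2 : ℂ)⁻¹ • x) = (2 : ℂ)⁻¹ • H x) ∧
      (∀ x : E, ‖f x - H x‖ ≤ L / (8 - 8 * L) * φ x x 0) := by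
  classical
  set g : E → ℕ → F := fun x n => (2 : ℂ) ^ n • f (((2 : ℂ) ^ n)⁻¹ • x) with hg
  have hL8 : (0 : ℝ) ≤ L / 8 := by positivity
  -- decay of φ along halvings
  have key : ∀ (x y : E) (n : ℕ),
      φ (((2:ℂ)^n)⁻¹ • x) (((2:ℂ)^n)⁻¹ • y) 0 ≤ (L/8)^n * φ x y 0 := by
    intro x y n
    induction n with
    | zero => simp
    | succ n ih =>
      have h2 : ∀ w : E, (2:ℂ) • (((2:ℂ)^(n+1))⁻¹ • w) = ((2:ℂ)^n)⁻¹ • w := by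
        intro w
        rw [smul_smul]
        congr 1
        rw [pow_succ]
        field_simp
      calc φ (((2:ℂ)^(n+1))⁻¹ • x) (((2:ℂ)^(n+1))⁻¹ • y) 0
          ≤ L / 8 * φ ((2:ℂ) • (((2:ℂ)^(n+1))⁻¹ • x)) ((2:ℂ) • (((2:ℂ)^(n+1))⁻¹ • y))
              ((2:ℂ) • (0:E)) := by
            have := hφ (((2:ℂ)^(n+1))⁻¹ • x) (((2:ℂ)^(n+1))⁻¹ • y) 0
            simpa using this
        _ = L / 8 * φ (((2:ℂ)^n)⁻¹ • x) (((2:ℂ)^n)⁻¹ • y) 0 := by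
            rw [h2, h2, smul_zero]
        _ ≤ L / 8 * ((L/8)^n * φ x y 0) := by
            exact mul_le_mul_of_nonneg_left ih hL8
        _ = (L/8)^(n+1) * φ x y 0 := by ring
  -- basic difference estimate
  have hdiffgen : ∀ (x y : E) (μ : ℂ), ‖μ‖ = 1 → ∀ n : ℕ,
      ‖g (μ • x + y) n - (μ • g x n + g y n)‖ ≤ (L/4)^n * φ x y 0 := by
    intro x y μ hμ n
    have hx : ((2:ℂ)^n)⁻¹ • (μ • x + y)
        = μ • (((2:ℂ)^n)⁻¹ • x) + ((2:ℂ)^n)⁻¹ • y := by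
      rw [smul_add, smul_comm]
    have : g (μ • x + y) n - (μ • g x n + g y n)
        = (2:ℂ)^n • (f (μ • (((2:ℂ)^n)⁻¹ • x) + ((2:ℂ)^n)⁻¹ • y)
            - μ • f (((2:ℂ)^n)⁻¹ • x) - f (((2:ℂ)^n)⁻¹ • y)) := by
      simp only [hg, hx, smul_sub, smul_add, smul_comm ((2:ℂ)^n) μ]
      abel
    rw [this, norm_smul]
    have hnorm2 : ‖(2:ℂ)^n‖ = 2^n := by
      simp [norm_pow]
    rw [hnorm2]
    calc (2:ℝ)^n * ‖f (μ • (((2:ℂ)^n)⁻¹ • x) + ((2:ℂ)^n)⁻¹ • y)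
            - μ • f (((2:ℂ)^n)⁻¹ • x) - f (((2:ℂ)^n)⁻¹ • y)‖
        ≤ (2:ℝ)^n * φ (((2:ℂ)^n)⁻¹ • x) (((2:ℂ)^n)⁻¹ • y) 0 := by
          exact mul_le_mul_of_nonneg_left (h1 μ hμ _ _) (by positivity)
      _ ≤ (2:ℝ)^n * ((L/8)^n * φ x y 0) :=
          mul_le_mul_of_nonneg_left (key x y n) (by positivity)
      _ = (L/4)^n * φ x y 0 := by
          have h : (L/4 : ℝ) = 2 * (L/8) := by ring
          rw [h, mul_pow, ← mul_assoc]
  -- consecutive difference estimate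
  have hdiff : ∀ (x : E) (n : ℕ),
      dist (g x n) (g x (n+1)) ≤ (L/8 * φ x x 0) * L^n := by
    intro x n
    set x' : E := ((2:ℂ)^(n+1))⁻¹ • x with hx'
    have h2 : (2:ℂ) • x' = ((2:ℂ)^n)⁻¹ • x := by
      rw [hx', smul_smul]
      congr 1
      rw [pow_succ]
      field_simp
    have hsum : x' + x' = ((2:ℂ)^n)⁻¹ • x := by
      rw [← h2, two_smul]
    have hrepr : g x n - g x (n+1)
        = (2:ℂ)^n • (f (x' + x') - f x' - f x') := by
      simp only [hg]
      rw [← hsum, ← hx', pow_succ, mul_smul, two_smul, smul_sub, smul_sub, smul_add]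
      abel
    have hest : ‖f ((1:ℂ) • x' + x') - (1:ℂ) • f x' - f x'‖ ≤ φ x' x' 0 :=
      h1 1 (by simp) x' x'
    rw [one_smul, one_smul] at hest
    rw [dist_eq_norm, hrepr, norm_smul]
    have hnorm2 : ‖(2:ℂ)^n‖ = 2^n := by simp [norm_pow]
    rw [hnorm2]
    calc (2:ℝ)^n * ‖f (x' + x') - f x' - f x'‖
        ≤ (2:ℝ)^n * φ x' x' 0 :=
          mul_le_mul_of_nonneg_left hest (by positivity)
      _ ≤ (2:ℝ)^n * ((L/8)^(n+1) * φ x x 0) :=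
          mul_le_mul_of_nonneg_left (key x x (n+1)) (by positivity)
      _ = (L/8 * φ x x 0) * (L/4)^n := by
          have h : (L/4 : ℝ) = 2 * (L/8) := by ring
          rw [h, mul_pow, pow_succ]
          ring
      _ ≤ (L/8 * φ x x 0) * L^n := by
          apply mul_le_mul_of_nonneg_left _ (mul_nonneg hL8 (hφ0 x x 0))
          exact pow_le_pow_left₀ (by positivity) (by linarith) n
  -- Cauchy and limit
  have hCauchy : ∀ x : E, ∃ a : F, Filter.Tendsto (g x) Filter.atTop (nhds a) := by
    intro x
    exact cauchySeq_tendsto_of_complete (cauchySeq_of_le_geometric L _ hL1 (hdiff x))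
  set H : E → F := fun x => (hCauchy x).choose with hH
  have hTendsto : ∀ x : E, Filter.Tendsto (g x) Filter.atTop (nhds (H x)) :=
    fun x => (hCauchy x).choose_spec
  -- H (μ•x + y) = μ•H x + H y for unit μ
  have Hmul : ∀ (μ : ℂ), ‖μ‖ = 1 → ∀ x y : E,
      H (μ • x + y) = μ • H x + H y := by
    intro μ hμ x y
    have t0 : Filter.Tendsto (fun n => g (μ • x + y) n - (μ • g x n + g y n))
        Filter.atTop (nhds 0) := by
      apply squeeze_zero_norm (hdiffgen x y μ hμ)
      rw [show (0:ℝ) = 0 * φ x y 0 by ring]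
      apply Filter.Tendsto.mul_const
      apply tendsto_pow_atTop_nhds_zero_of_abs_lt_one
      rw [abs_of_nonneg (by positivity)]
      linarith
    have t1 : Filter.Tendsto (fun n => μ • g x n + g y n)
        Filter.atTop (nhds (μ • H x + H y)) :=
      (((hTendsto x).const_smul μ).add (hTendsto y))
    have t2 : Filter.Tendsto (g (μ • x + y)) Filter.atTop (nhds (μ • H x + H y)) := by
      have := t0.add t1
      simpa using this
    exact tendsto_nhds_unique (hTendsto _) t2
  have Hadd : ∀ x y : E, H (x + y) = H x + H y := by
    intro x y
    have := Hmul 1 (by simp) x y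
    simpa using this
  have H0 : H 0 = 0 := by
    have h := Hadd 0 0
    simp only [add_zero] at h
    exact left_eq_add.mp h
  have Hunit : ∀ (μ : ℂ), ‖μ‖ = 1 → ∀ x : E, H (μ • x) = μ • H x := by
    intro μ hμ x
    have := Hmul μ hμ x 0
    simpa [H0] using this
  have Hnat : ∀ (n : ℕ) (x : E), H (n • x) = n • H x := by
    intro n x
    induction n with
    | zero => simpa using H0
    | succ n ih => rw [succ_nsmul, succ_nsmul, Hadd, ih]
  -- real homogeneity for |r| ≤ 1 (in doubled form)
  have Hsmall : ∀ (r : ℝ), |r| ≤ 1 → ∀ x : E,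
      H (((2*r : ℝ) : ℂ) • x) = ((2*r : ℝ) : ℂ) • H x := by
    intro r hr x
    set μ : ℂ := ⟨r, Real.sqrt (1 - r^2)⟩ with hμdef
    have hr2 : r^2 ≤ 1 := by
      have := abs_le.mp hr
      nlinarith
    have hnn : (0:ℝ) ≤ 1 - r^2 := by linarith
    have hμ : ‖μ‖ = 1 := by
      rw [Complex.norm_def, Complex.normSq_mk,
        Real.mul_self_sqrt hnn, show r * r + (1 - r^2) = 1 by ring]
      exact Real.sqrt_one
    have hν : ‖(starRingEnd ℂ) μ‖ = 1 := by rw [RCLike.norm_conj]; exact hμ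
    have hsum : μ + (starRingEnd ℂ) μ = ((2*r : ℝ) : ℂ) := by
      rw [Complex.add_conj]
    have : H (μ • x + (starRingEnd ℂ) μ • x)
        = μ • H x + (starRingEnd ℂ) μ • H x := by
      rw [Hmul μ hμ, Hunit _ hν]
    rw [← add_smul, hsum] at this
    rw [this, ← add_smul, hsum]
  have Hreal : ∀ (r : ℝ) (x : E), H ((r : ℂ) • x) = (r : ℂ) • H x := by
    intro r x
    obtain ⟨n, hn⟩ := exists_nat_ge |r|
    set m : ℕ := n + 1 with hm
    have hmpos : (0:ℝ) < m := by positivity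
    have hsmall : |r / (2 * m)| ≤ 1 := by
      rw [abs_div, div_le_one (by positivity)]
      have h1' : |r| ≤ (m : ℝ) := hn.trans (by exact_mod_cast Nat.le_succ n)
      have h2' : |(2 * (m:ℝ))| = 2 * (m:ℝ) := abs_of_nonneg (by positivity)
      rw [h2']
      linarith
    have hmne : ((m:ℕ):ℝ) ≠ 0 := ne_of_gt hmpos
    have hscalR : (2 * (r / (2 * (m:ℕ))) : ℝ) * ((m:ℕ):ℝ) = r := by
      field_simp [hmne]
    have hscal : ((2 * (r / (2 * m)) : ℝ) : ℂ) * ((m:ℕ) : ℂ) = (r : ℂ) := by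
      exact_mod_cast hscalR
    have hdecomp : (r : ℂ) • x = ((2 * (r / (2 * m)) : ℝ) : ℂ) • (m • x) := by
      rw [← Nat.cast_smul_eq_nsmul ℂ m x, smul_smul, hscal]
    rw [hdecomp, Hsmall _ hsmall, Hnat, ← Nat.cast_smul_eq_nsmul ℂ m (H x), smul_smul,
      hscal]
  have Hsmul : ∀ (α : ℂ) (x : E), H (α • x) = α • H x := by
    intro α x
    have hdecomp : α • x = ((α.re : ℝ) : ℂ) • x + ((α.im : ℝ) : ℂ) • (Complex.I • x) := by
      rw [smul_smul, ← add_smul]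
      congr 1
      simp [Complex.ext_iff]
    rw [hdecomp, Hadd, Hreal, Hreal, Hunit Complex.I (by simp) x, smul_smul,
      ← add_smul]
    congr 1
    simp [Complex.ext_iff]
  refine ⟨H, hTendsto, ?_, ?_, ?_⟩
  · intro α β x y
    rw [Hadd, Hsmul, Hsmul]
  · intro x
    exact Hsmul _ x
  · intro x
    have hb := dist_le_of_le_geometric_of_tendsto₀ L (L/8 * φ x x 0) hL1 (hdiff x)
      (hTendsto x)
    have hg0 : g x 0 = f x := by simp [hg]
    rw [hg0, dist_eq_norm] at hb
    calc ‖f x - H x‖ ≤ (L/8 * φ x x 0) / (1 - L) := hb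
      _ = L / (8 - 8 * L) * φ x x 0 := by
          field_simp
end
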